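/- arXiv:1710.08593 — 9 statements merged into one kernel-verified Lean document; each statement's English description precedes it below -/
import Mathlib

section
/- Fix n ∈ ℕ, complex numbers a_1, ..., a_n and c ∈ ℂ. Define the nonlinear operator 𝔇_n(u) = [D − a_n u]⋯[D − a_2 u][D − a_1 u](u), where [D − a u](v) = v' − a·u·v. Then for the function u(z) = c/z (z ≠ 0) one has 𝔇_n(u)(z) = (−1)^n · c · ∏_{k=1}^n (k + a_k c) · z^{−(n+1)}. In particular, 𝔇_n(u) vanishes identically on ℂ∖{0} if and only if c ∈ {0, −1/a_1, −2/a_2, ..., −n/a_n} (interpreting −k/a_k as absent when a_k = 0). -/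
/-- The nonlinear operator `𝔇_n(u) = [D - a_n u] ⋯ [D - a_1 u] (u)`, where
`[D - a·u](v) = v' - a·u·v`; here `a k` denotes `a_{k+1}`. -/
noncomputable def frakD (a : ℕ → ℂ) (u : ℂ → ℂ) : ℕ → (ℂ → ℂ)
  | 0 => u
  | k + 1 => fun z => deriv (frakD a u k) z - a k * u z * frakD a u k z

lemma frakD_eq (a : ℕ → ℂ) (c : ℂ) :
    ∀ n : ℕ, ∀ z : ℂ, z ≠ 0 →
      frakD a (fun w => c / w) n z
        = (-1) ^ n * c * (∏ k ∈ Finset.range n, (((k : ℂ) + 1) + a k * c))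
            * z ^ (-(n + 1) : ℤ) := by
  intro n
  induction n with
  | zero =>
    intro z hz
    simp [frakD, zpow_neg, div_eq_mul_inv, mul_comm]
  | succ n ih =>
    intro z hz
    set C : ℂ := (-1) ^ n * c * (∏ k ∈ Finset.range n, (((k : ℂ) + 1) + a k * c)) with hC
    have hev : frakD a (fun w => c / w) n =ᶠ[nhds z] fun w => C * w ^ (-(n + 1) : ℤ) := by
      filter_upwards [eventually_ne_nhds hz] with w hw
      exact ih w hw
    have hderiv : deriv (frakD a (fun w => c / w) n) z
        = C * ((-(n + 1) : ℤ) * z ^ ((-(n + 1) : ℤ) - 1)) := by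
      rw [hev.deriv_eq]
      exact ((hasDerivAt_zpow (-(n + 1)) z (Or.inl hz)).const_mul C).deriv
    show deriv (frakD a (fun w => c / w) n) z
        - a n * (c / z) * frakD a (fun w => c / w) n z = _
    rw [hderiv, ih z hz, Finset.prod_range_succ]
    have h0 : (-((n : ℤ) + 1 + 1)) = (-((n : ℤ) + 1)) - 1 := by ring
    have h2 : (-((n : ℤ) + 1)) = (-((n : ℤ) + 1) - 1) + 1 := by ring
    have hcast : (-(((n : ℕ) + 1 : ℕ) : ℤ) - 1) = -((n : ℤ) + 1 + 1) := by push_cast; ring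
    rw [show (-(((n + 1 : ℕ) : ℤ) + 1)) = -((n : ℤ) + 1) - 1 by push_cast; ring]
    rw [h2, zpow_add₀ hz, zpow_one]
    push_cast
    rw [hC]
    field_simp
    ring

/-- for `u(z) = c / z`, `𝔇_n(u)(z) = (-1)^n c ∏_{k=1}^n (k + a_k c) z^{-(n+1)}`,
and `𝔇_n(u)` vanishes identically on `ℂ ∖ {0}` iff `c = 0` or `c = -k/a_k` for some `k`. -/
theorem stmt_2 (n : ℕ) (a : ℕ → ℂ) (c : ℂ) :
    (∀ z : ℂ, z ≠ 0 →
      frakD a (fun w => c / w) n z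
        = (-1) ^ n * c * (∏ k ∈ Finset.range n, (((k : ℂ) + 1) + a k * c)) / z ^ (n + 1)) ∧
    ((∀ z : ℂ, z ≠ 0 → frakD a (fun w => c / w) n z = 0) ↔
      (c = 0 ∨ ∃ k ∈ Finset.range n, ((k : ℂ) + 1) + a k * c = 0)) := by
  have key : ∀ z : ℂ, z ≠ 0 →
      frakD a (fun w => c / w) n z
        = (-1) ^ n * c * (∏ k ∈ Finset.range n, (((k : ℂ) + 1) + a k * c)) / z ^ (n + 1) := by
    intro z hz
    rw [frakD_eq a c n z hz]
    have : (-((n : ℤ) + 1)) = -(((n + 1 : ℕ) : ℤ)) := by push_cast; ring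
    rw [this, zpow_neg, zpow_natCast, div_eq_mul_inv]
  refine ⟨key, ?_⟩
  constructor
  · intro h
    have h1 := h 1 one_ne_zero
    rw [key 1 one_ne_zero] at h1
    simp only [one_pow, div_one, mul_eq_zero] at h1
    rcases h1 with (h1 | h1) | h1
    · exact absurd h1 (pow_ne_zero n (by norm_num))
    · exact Or.inl h1
    · exact Or.inr (Finset.prod_eq_zero_iff.mp h1)
  · intro h z hz
    rw [key z hz]
    rcases h with h | ⟨k, hk, hk0⟩
    · simp [h]
    · rw [Finset.prod_eq_zero hk hk0]
      simp
end

section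
/- Let a_1, b_1, α, c ∈ ℂ with α a_1 + b_1 ≠ 0. Then the function u(z) = −(α + b_1 c e^{(α a_1 + b_1)z}) / (a_1 c e^{(α a_1 + b_1)z} − 1) satisfies the Riccati equation u'(z) = (a_1 u(z) + b_1)(u(z) − α) at every point z where the denominator a_1 c e^{(α a_1 + b_1)z} − 1 is nonzero. -/
/-- the explicit function solves the Riccati equation
`u' = (a₁ u + b₁)(u - α)` wherever the denominator is nonzero. -/
theorem stmt_3 (a1 b1 α c : ℂ) (h : α * a1 + b1 ≠ 0) (u : ℂ → ℂ)
    (hu : u = fun z => -(α + b1 * c * Complex.exp ((α * a1 + b1) * z)) /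
      (a1 * c * Complex.exp ((α * a1 + b1) * z) - 1)) :
    ∀ z : ℂ, a1 * c * Complex.exp ((α * a1 + b1) * z) - 1 ≠ 0 →
      deriv u z = (a1 * u z + b1) * (u z - α) := by
  intro z hz
  set k := α * a1 + b1 with hk
  have hE : HasDerivAt (fun z => Complex.exp (k * z)) (k * Complex.exp (k * z)) z := by
    simpa [mul_comm] using ((hasDerivAt_id z).const_mul k).cexp
  have hN : HasDerivAt (fun z => -(α + b1 * c * Complex.exp (k * z)))
      (-(b1 * c * (k * Complex.exp (k * z)))) z := by
    exact (((hE.const_mul (b1 * c)).const_add α).neg)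
  have hD : HasDerivAt (fun z => a1 * c * Complex.exp (k * z) - 1)
      (a1 * c * (k * Complex.exp (k * z))) z := by
    simpa using ((hE.const_mul (a1 * c)).sub_const 1)
  have hquo : HasDerivAt (fun z => -(α + b1 * c * Complex.exp (k * z)) / (a1 * c * Complex.exp (k * z) - 1)) _ z := hN.div hD hz
  rw [hu] at *
  rw [hquo.deriv]
  beta_reduce
  set E := Complex.exp (k * z)
  have hz' : c * E * a1 - 1 ≠ 0 := by convert hz using 1; ring
  field_simp
  ring
end

section
/- Let a ∈ ℂ, a ≠ 0, and c_0, c_1 ∈ ℂ. The function w(z) = −1/(2a(z − c_0)) − 1/(2a(z − c_1)) satisfies w''(z) − 6a·w(z)·w'(z) + 4a²·w(z)³ = 0 for all z ∈ ℂ ∖ {c_0, c_1}. -/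
lemma aux_basic (a c : ℂ) (ha : a ≠ 0) (z : ℂ) (hz : z ≠ c) :
    HasDerivAt (fun z : ℂ => 1 / (2 * a * (z - c))) (-(1 / (2 * a * (z - c) ^ 2))) z := by
  have hzc : z - c ≠ 0 := sub_ne_zero.mpr hz
  have hne : 2 * a * (z - c) ≠ 0 := by
    have : z - c ≠ 0 := sub_ne_zero.mpr hz
    simp [ha, this]
  have h1 : HasDerivAt (fun z : ℂ => 2 * a * (z - c)) (2 * a) z := by
    simpa using ((hasDerivAt_id z).sub_const c).const_mul (2 * a)
  have h2 := h1.inv hne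
  simp only [one_div]
  convert h2 using 1
  any_goals rfl
  field_simp

lemma aux_inv2 (a c : ℂ) (ha : a ≠ 0) (z : ℂ) (hz : z ≠ c) :
    HasDerivAt (fun z : ℂ => 1 / (2 * a * (z - c) ^ 2)) (-(1 / (a * (z - c) ^ 3))) z := by
  have hzc : z - c ≠ 0 := sub_ne_zero.mpr hz
  have hne : 2 * a * (z - c) ^ 2 ≠ 0 := by simp [ha, hzc]
  have h1 : HasDerivAt (fun z : ℂ => 2 * a * (z - c) ^ 2) (2 * a * (2 * (z - c))) z := by
    have := (((hasDerivAt_id z).sub_const c).pow 2).const_mul (2 * a)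
    simpa using this
  have h2 := h1.inv hne
  simp only [one_div]
  convert h2 using 1
  any_goals rfl
  field_simp

set_option maxHeartbeats 1000000 in
/-- `w(z) = -1/(2a(z-c₀)) - 1/(2a(z-c₁))` solves
`w'' - 6 a w w' + 4 a² w³ = 0` on `ℂ ∖ {c₀, c₁}`. -/
theorem stmt_6 (a c0 c1 : ℂ) (ha : a ≠ 0) (w : ℂ → ℂ)
    (hw : w = fun z => -(1 / (2 * a * (z - c0))) - 1 / (2 * a * (z - c1))) :
    ∀ z : ℂ, z ≠ c0 → z ≠ c1 →
      deriv (deriv w) z - 6 * a * w z * deriv w z + 4 * a ^ 2 * (w z) ^ 3 = 0 := by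
  intro z hz0 hz1
  set w1 : ℂ → ℂ := fun z => 1 / (2 * a * (z - c0) ^ 2) + 1 / (2 * a * (z - c1) ^ 2) with hw1
  -- w has derivative w1 on the open set away from c0, c1
  have hder : ∀ x : ℂ, x ≠ c0 → x ≠ c1 → HasDerivAt w (w1 x) x := by
    intro x hx0 hx1
    have h0 := aux_basic a c0 ha x hx0
    have h1 := aux_basic a c1 ha x hx1
    have := (h0.neg).sub h1
    rw [hw]
    convert this using 1
    any_goals rfl
    simp only [hw1]
    ring
  have hU : IsOpen ({c0, c1}ᶜ : Set ℂ) := by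
    exact ((Set.finite_singleton c1).insert c0).isClosed.isOpen_compl
  have hzU : z ∈ ({c0, c1}ᶜ : Set ℂ) := by simp [hz0, hz1]
  have hEq : deriv w =ᶠ[nhds z] w1 := by
    filter_upwards [hU.mem_nhds hzU] with x hx
    simp only [Set.mem_compl_iff, Set.mem_insert_iff, Set.mem_singleton_iff, not_or] at hx
    exact (hder x hx.1 hx.2).deriv
  have hderw : deriv w z = w1 z := (hder z hz0 hz1).deriv
  -- derivative of w1
  have hder2 : HasDerivAt w1 (-(1 / (a * (z - c0) ^ 3)) + -(1 / (a * (z - c1) ^ 3))) z :=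
    (aux_inv2 a c0 ha z hz0).add (aux_inv2 a c1 ha z hz1)
  have h2 : deriv (deriv w) z = -(1 / (a * (z - c0) ^ 3)) + -(1 / (a * (z - c1) ^ 3)) := by
    rw [hEq.deriv_eq]
    exact hder2.deriv
  have hzc0 : z - c0 ≠ 0 := sub_ne_zero.mpr hz0
  have hzc1 : z - c1 ≠ 0 := sub_ne_zero.mpr hz1
  have key : ∀ u v : ℂ, u ≠ 0 → v ≠ 0 →
      (-(1 / (a * u ^ 3)) + -(1 / (a * v ^ 3)))
        - 6 * a * (-(1 / (2 * a * u)) - 1 / (2 * a * v))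
            * (1 / (2 * a * u ^ 2) + 1 / (2 * a * v ^ 2))
        + 4 * a ^ 2 * (-(1 / (2 * a * u)) - 1 / (2 * a * v)) ^ 3 = 0 := by
    intro u v hu hv
    field_simp
    ring_nf
  rw [h2, hderw, hw]
  simp only [hw1]
  exact key (z - c0) (z - c1) hzc0 hzc1
end

section
/- Let K ∈ ℂ and let v : U → ℂ be twice differentiable on a connected open set U ⊆ ℂ with v(z) ≠ 0 on U. If 4 v(z) v''(z) − 5 v'(z)² − K·v(z)³ = 0 on U, then the function z ↦ (v'(z)² − K·v(z)³)² / v(z)⁵ is constant on U. -/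
open Metric Set

/-- A function with zero derivative at every point of a preconnected open set is constant
on that set. -/
lemma const_of_hasDerivAt_zero {U : Set ℂ} (hU : IsOpen U) (hUconn : IsPreconnected U)
    {g : ℂ → ℂ} (hg : ∀ z ∈ U, HasDerivAt g 0 z) :
    ∀ z ∈ U, ∀ z' ∈ U, g z = g z' := by
  -- On any ball contained in U, g is constant.
  have hball : ∀ x ε, 0 < ε → ball x ε ⊆ U → ∀ y ∈ ball x ε, g y = g x := by
    intro x ε hε hsub y hy
    have hconv : Convex ℝ (ball x ε) := convex_ball x ε
    have hdiff : DifferentiableOn ℂ g (ball x ε) := fun w hw =>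
      ((hg w (hsub hw)).differentiableAt).differentiableWithinAt
    refine hconv.is_const_of_fderivWithin_eq_zero hdiff ?_ hy (mem_ball_self hε)
    intro w hw
    have h1 : fderivWithin ℂ g (ball x ε) w = fderiv ℂ g w :=
      fderivWithin_of_isOpen isOpen_ball hw
    have h2 : fderiv ℂ g w = 0 := by
      have hF : HasFDerivAt g ((1 : ℂ →L[ℂ] ℂ).smulRight (0 : ℂ)) w :=
        (hg w (hsub hw)).hasFDerivAt
      rw [hF.fderiv]
      ext
      simp
    rw [h1, h2]
  intro z hz z' hz'
  set c := g z with hc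
  -- u : points with a ball in U on which g is constantly c
  set u : Set ℂ := {x | ∃ ε > 0, ball x ε ⊆ U ∧ (∀ y ∈ ball x ε, g y = c)} with hu
  set w : Set ℂ := {x | ∃ ε > 0, ball x ε ⊆ U ∧ (∀ y ∈ ball x ε, g y = g x) ∧ g x ≠ c}
    with hwdef
  have hop : ∀ x ∈ U, ∃ ε > 0, ball x ε ⊆ U ∧ ∀ y ∈ ball x ε, g y = g x := by
    intro x hx
    obtain ⟨ε, hε, hsub⟩ := Metric.isOpen_iff.1 hU x hx
    exact ⟨ε, hε, hsub, hball x ε hε hsub⟩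
  have huopen : IsOpen u := by
    rw [Metric.isOpen_iff]
    rintro x ⟨ε, hε, hsub, hconst⟩
    refine ⟨ε, hε, ?_⟩
    intro y hy
    refine ⟨ε - dist y x, by simp [dist_comm] at hy ⊢; linarith [mem_ball.1 hy], ?_, ?_⟩
    · exact fun t ht => hsub (by
        have := mem_ball.1 ht
        have := mem_ball.1 hy
        exact mem_ball.2 (by
          calc dist t x ≤ dist t y + dist y x := dist_triangle t y x
          _ < (ε - dist y x) + dist y x := by linarith
          _ = ε := by ring))
    · intro t ht
      refine hconst t ?_
      have h1 := mem_ball.1 ht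
      have h2 := mem_ball.1 hy
      exact mem_ball.2 (by
        calc dist t x ≤ dist t y + dist y x := dist_triangle t y x
        _ < (ε - dist y x) + dist y x := by linarith
        _ = ε := by ring)
  have hwopen : IsOpen w := by
    rw [Metric.isOpen_iff]
    rintro x ⟨ε, hε, hsub, hconst, hne⟩
    refine ⟨ε, hε, fun y hy => ?_⟩
    have hgy : g y = g x := hconst y hy
    refine ⟨ε - dist y x, by simp [dist_comm] at hy ⊢; linarith [mem_ball.1 hy], ?_, ?_, ?_⟩
    · intro t ht
      refine hsub ?_
      have h1 := mem_ball.1 ht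
      have h2 := mem_ball.1 hy
      exact mem_ball.2 (by
        calc dist t x ≤ dist t y + dist y x := dist_triangle t y x
        _ < (ε - dist y x) + dist y x := by linarith
        _ = ε := by ring)
    · intro t ht
      have h1 := mem_ball.1 ht
      have h2 := mem_ball.1 hy
      have : t ∈ ball x ε := mem_ball.2 (by
        calc dist t x ≤ dist t y + dist y x := dist_triangle t y x
        _ < (ε - dist y x) + dist y x := by linarith
        _ = ε := by ring)
      rw [hconst t this, hgy]
    · rw [hgy]; exact hne
  have hdisj : Disjoint u w := by
    rw [Set.disjoint_left]
    rintro x ⟨ε₁, hε₁, hsub₁, hc₁⟩ ⟨ε₂, hε₂, hsub₂, hc₂, hne₂⟩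
    exact hne₂ (hc₁ x (mem_ball_self hε₁))
  have hcover : U ⊆ u ∪ w := by
    intro x hx
    obtain ⟨ε, hε, hsub, hconst⟩ := hop x hx
    by_cases h : g x = c
    · exact Or.inl ⟨ε, hε, hsub, fun y hy => (hconst y hy).trans h⟩
    · exact Or.inr ⟨ε, hε, hsub, hconst, h⟩
  have hzu : z ∈ u := by
    obtain ⟨ε, hε, hsub, hconst⟩ := hop z hz
    exact ⟨ε, hε, hsub, fun y hy => hconst y hy⟩
  have hUu : U ⊆ u :=
    hUconn.subset_left_of_subset_union huopen hwopen hdisj hcover ⟨z, hz, hzu⟩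
  obtain ⟨ε, hε, _, hconst⟩ := hUu hz'
  exact (hconst z' (mem_ball_self hε)).symm

/-- first integral of `4 v v'' - 5 (v')² - K v³ = 0`. -/
theorem stmt_12 (K : ℂ) (U : Set ℂ) (hU : IsOpen U) (hUconn : IsPreconnected U)
    (v : ℂ → ℂ)
    (hv : ∀ z ∈ U, DifferentiableAt ℂ v z)
    (hv' : ∀ z ∈ U, DifferentiableAt ℂ (deriv v) z)
    (hvne : ∀ z ∈ U, v z ≠ 0)
    (heq : ∀ z ∈ U, 4 * v z * deriv (deriv v) z - 5 * (deriv v z) ^ 2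
        - K * (v z) ^ 3 = 0) :
    ∃ C : ℂ, ∀ z ∈ U,
      ((deriv v z) ^ 2 - K * (v z) ^ 3) ^ 2 / (v z) ^ 5 = C := by
  set g : ℂ → ℂ := fun z => ((deriv v z) ^ 2 - K * (v z) ^ 3) ^ 2 / (v z) ^ 5 with hg
  have hg0 : ∀ z ∈ U, HasDerivAt g 0 z := by
    intro z hz
    have hw : HasDerivAt v (deriv v z) z := (hv z hz).hasDerivAt
    have hw' : HasDerivAt (deriv v) (deriv (deriv v) z) z := (hv' z hz).hasDerivAt
    have hA : HasDerivAt (fun z => (deriv v z) ^ 2 - K * (v z) ^ 3)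
        (2 * (deriv v z) ^ 1 * deriv (deriv v) z
          - K * (3 * (v z) ^ 2 * deriv v z)) z := by
      exact (hw'.pow 2).sub ((hw.pow 3).const_mul K)
    have hA2 := hA.pow 2
    have hv5 := hw.pow 5
    have hvne5 : (v z) ^ 5 ≠ 0 := pow_ne_zero 5 (hvne z hz)
    have hdiv := hA2.div hv5 hvne5
    have : HasDerivAt g
        ((2 * ((deriv v z) ^ 2 - K * (v z) ^ 3) ^ 1 *
            (2 * (deriv v z) ^ 1 * deriv (deriv v) z - K * (3 * (v z) ^ 2 * deriv v z)) *
            (v z) ^ 5 -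
          ((deriv v z) ^ 2 - K * (v z) ^ 3) ^ 2 * (5 * (v z) ^ 4 * deriv v z)) /
          ((v z) ^ 5) ^ 2) z := hdiv
    convert this using 1
    rw [eq_div_iff (pow_ne_zero 2 hvne5)]
    have hE := heq z hz
    linear_combination (-(v z) ^ 4 * ((deriv v z) ^ 2 - K * (v z) ^ 3) * deriv v z) * hE
  rcases U.eq_empty_or_nonempty with rfl | ⟨z₀, hz₀⟩
  · exact ⟨0, fun z hz => absurd hz (notMem_empty z)⟩
  · exact ⟨g z₀, fun z hz => const_of_hasDerivAt_zero hU hUconn hg0 z hz z₀ hz₀⟩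
end

section
/- The set of pairs (x, y) of nonzero integers satisfying 2/x + 2/y = 1 (equivalently 2y + 2x = xy) is exactly {(3, 6), (6, 3), (4, 4), (1, −2), (−2, 1)}. -/
/-- the nonzero integer solutions of `2/x + 2/y = 1` are exactly
`(3,6), (6,3), (4,4), (1,-2), (-2,1)`. -/
theorem stmt_13 :
    {p : ℤ × ℤ | p.1 ≠ 0 ∧ p.2 ≠ 0 ∧ (2 : ℚ) / (p.1 : ℚ) + 2 / (p.2 : ℚ) = 1}
      = {(3, 6), (6, 3), (4, 4), (1, -2), (-2, 1)} := by
  ext ⟨x, y⟩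
  simp only [Set.mem_setOf_eq, Set.mem_insert_iff, Set.mem_singleton_iff, Prod.mk.injEq]
  constructor
  · rintro ⟨hx, hy, h⟩
    have hx' : (x : ℚ) ≠ 0 := Int.cast_ne_zero.mpr hx
    have hy' : (y : ℚ) ≠ 0 := Int.cast_ne_zero.mpr hy
    have hz : 2 * y + 2 * x = x * y := by
      have : (2 * y + 2 * x : ℚ) = x * y := by field_simp at h; linarith
      exact_mod_cast this
    have hd : (x - 2) ∣ 4 := ⟨y - 2, by ring_nf; omega⟩
    have hb : |x - 2| ≤ 4 := Int.le_of_dvd (by norm_num) ((abs_dvd _ _).mpr hd)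
    rw [abs_le] at hb
    have hx1 : -2 ≤ x := by omega
    have hx2 : x ≤ 6 := by omega
    clear hd
    interval_cases x <;> omega
  · rintro (⟨h1, h2⟩ | ⟨h1, h2⟩ | ⟨h1, h2⟩ | ⟨h1, h2⟩ | ⟨h1, h2⟩) <;> subst h1 <;> subst h2 <;>
      norm_num
end

section
/- Let k ∈ ℂ, k ≠ 0, c ∈ ℂ, d ∈ ℂ. Define v(ζ) = −2c²/(k·(cosh(√2·c·ζ + d) + 1)) for all ζ with cosh(√2·c·ζ + d) + 1 ≠ 0. Then v'(ζ)² = 2k·v(ζ)³ + 2c²·v(ζ)² at every such ζ. Consequently v also satisfies the second-order equation k v³ − v v'' + (v')² = 0. -/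
/-- the cosh-type function
`v(ζ) = -2c²/(k(cosh(√2 c ζ + d) + 1))` satisfies `(v')² = 2k v³ + 2c² v²`
and hence `k v³ - v v'' + (v')² = 0`. Here `s` is a fixed square root of `2c²`. -/
theorem stmt_14 (k c d s : ℂ) (hk : k ≠ 0) (hc : c ≠ 0) (hs : s ^ 2 = 2 * c ^ 2)
    (v : ℂ → ℂ)
    (hv : v = fun ζ => -(2 * c ^ 2) / (k * (Complex.cosh (s * ζ + d) + 1))) :
    ∀ ζ : ℂ, Complex.cosh (s * ζ + d) + 1 ≠ 0 →
      (deriv v ζ) ^ 2 = 2 * k * (v ζ) ^ 3 + 2 * c ^ 2 * (v ζ) ^ 2 ∧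
      k * (v ζ) ^ 3 - v ζ * deriv (deriv v) ζ + (deriv v ζ) ^ 2 = 0 := by
  have hw : ∀ z : ℂ, HasDerivAt (fun z : ℂ => s * z + d) s z := by
    intro z
    simpa using ((hasDerivAt_id z).const_mul s).add_const d
  -- derivative of the denominator
  have hden : ∀ z : ℂ, HasDerivAt (fun z => k * (Complex.cosh (s * z + d) + 1))
      (k * (Complex.sinh (s * z + d) * s)) z := by
    intro z
    exact (((Complex.hasDerivAt_cosh (s * z + d)).comp z (hw z)).add_const 1).const_mul k
  -- derivative of v at points of the open set
  have hvU : ∀ z : ℂ, Complex.cosh (s * z + d) + 1 ≠ 0 →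
      HasDerivAt v (2 * c ^ 2 * s * Complex.sinh (s * z + d)
        / (k * (Complex.cosh (s * z + d) + 1) ^ 2)) z := by
    intro z hz
    have hne : k * (Complex.cosh (s * z + d) + 1) ≠ 0 := mul_ne_zero hk hz
    have h := (hasDerivAt_const z (-(2 * c ^ 2))).div (hden z) hne
    rw [hv]
    exact h.congr_deriv (by field_simp; ring)
  intro ζ hζ
  have hU : IsOpen {z : ℂ | Complex.cosh (s * z + d) + 1 ≠ 0} := by
    have : Continuous (fun z : ℂ => Complex.cosh (s * z + d) + 1) := by fun_prop
    exact isOpen_ne.preimage this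
  have hmem : {z : ℂ | Complex.cosh (s * z + d) + 1 ≠ 0} ∈ nhds ζ := hU.mem_nhds hζ
  set f1 : ℂ → ℂ := fun z => 2 * c ^ 2 * s * Complex.sinh (s * z + d)
      / (k * (Complex.cosh (s * z + d) + 1) ^ 2) with hf1
  have hEq : deriv v =ᶠ[nhds ζ] f1 := by
    filter_upwards [hmem] with z hz
    exact (hvU z hz).deriv
  have hdv : deriv v ζ = f1 ζ := (hvU ζ hζ).deriv
  -- second derivative
  have hnum : HasDerivAt (fun z : ℂ => 2 * c ^ 2 * s * Complex.sinh (s * z + d))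
      (2 * c ^ 2 * s * (Complex.cosh (s * ζ + d) * s)) ζ :=
    (((Complex.hasDerivAt_sinh (s * ζ + d)).comp ζ (hw ζ))).const_mul (2 * c ^ 2 * s)
  have hden2 : HasDerivAt (fun z : ℂ => k * (Complex.cosh (s * z + d) + 1) ^ 2)
      (k * (2 * (Complex.cosh (s * ζ + d) + 1) ^ 1 * (Complex.sinh (s * ζ + d) * s))) ζ := by
    have h := ((((Complex.hasDerivAt_cosh (s * ζ + d)).comp ζ (hw ζ)).add_const 1).fun_pow 2).const_mul k
    simpa using h
  have hne2 : k * (Complex.cosh (s * ζ + d) + 1) ^ 2 ≠ 0 :=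
    mul_ne_zero hk (pow_ne_zero 2 hζ)
  have hf1' : HasDerivAt f1
      ((2 * c ^ 2 * s * (Complex.cosh (s * ζ + d) * s)
          * (k * (Complex.cosh (s * ζ + d) + 1) ^ 2)
        - 2 * c ^ 2 * s * Complex.sinh (s * ζ + d)
          * (k * (2 * (Complex.cosh (s * ζ + d) + 1) ^ 1 * (Complex.sinh (s * ζ + d) * s))))
        / (k * (Complex.cosh (s * ζ + d) + 1) ^ 2) ^ 2) ζ :=
    hnum.div hden2 hne2
  have hddv : deriv (deriv v) ζ =
      ((2 * c ^ 2 * s * (Complex.cosh (s * ζ + d) * s)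
          * (k * (Complex.cosh (s * ζ + d) + 1) ^ 2)
        - 2 * c ^ 2 * s * Complex.sinh (s * ζ + d)
          * (k * (2 * (Complex.cosh (s * ζ + d) + 1) ^ 1 * (Complex.sinh (s * ζ + d) * s))))
        / (k * (Complex.cosh (s * ζ + d) + 1) ^ 2) ^ 2) := by
    rw [Filter.EventuallyEq.deriv_eq hEq]
    exact hf1'.deriv
  have hvζ : v ζ = -(2 * c ^ 2) / (k * (Complex.cosh (s * ζ + d) + 1)) := by rw [hv]
  set C := Complex.cosh (s * ζ + d) with hC
  set S := Complex.sinh (s * ζ + d) with hS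
  have hS2 : S ^ 2 = C ^ 2 - 1 := by
    have := Complex.cosh_sq_sub_sinh_sq (s * ζ + d)
    rw [← hC, ← hS] at this
    linear_combination -this
  have hSS : S * S = C ^ 2 - 1 := by rw [← sq]; exact hS2
  constructor
  · rw [hdv, hf1, hvζ]
    simp only
    rw [← hC, ← hS]
    field_simp
    linear_combination S^2 * hs + (2*c^2) * hS2
  · rw [hdv, hddv, hvζ, hf1]
    simp only
    rw [← hC, ← hS]
    field_simp
    linear_combination (4*c^4*(C*(C+1) - S^2)) * hs + (-(8*c^6)) * hS2
end

section
/- Let c ∈ ℂ, c ≠ 0, and d ∈ ℂ. The function f(z) = c·cot(d − cz/2) satisfies f''(z) = f(z)·f'(z) at every z where sin(d − cz/2) ≠ 0. Consequently, for a_2 ≠ 0 and b_2 ∈ ℂ, the function u(z) = (c·cot(d − cz/2) − b_2)/a_2 satisfies u'' − (a_2 u + b_2)u' = 0, which is the expansion of the factorized equation [D − (a_2 u + b_2)][D](u − α) = 0 in the case a_1 = b_1 = 0. -/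
/-- `f(z) = c·cot(d - cz/2)` satisfies `f'' = f f'`, and
`u = (f - b₂)/a₂` satisfies `u'' - (a₂ u + b₂) u' = 0`. -/
theorem stmt_15 (c d : ℂ) (hc : c ≠ 0) (a2 b2 : ℂ) (ha2 : a2 ≠ 0)
    (f u : ℂ → ℂ)
    (hf : f = fun z => c * (Complex.cos (d - c * z / 2) / Complex.sin (d - c * z / 2)))
    (hu : u = fun z => (f z - b2) / a2) :
    ∀ z : ℂ, Complex.sin (d - c * z / 2) ≠ 0 →
      deriv (deriv f) z = f z * deriv f z ∧
      deriv (deriv u) z - (a2 * u z + b2) * deriv u z = 0 := by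
  subst hf hu
  intro z hz
  set S : Set ℂ := {w : ℂ | Complex.sin (d - c * w / 2) ≠ 0} with hSdef
  have hSopen : IsOpen S := by
    have : S = (fun w => Complex.sin (d - c * w / 2)) ⁻¹' {0}ᶜ := rfl
    rw [this]
    exact (isOpen_compl_singleton).preimage (by continuity)
  have hzS : z ∈ S := hz
  have hg : ∀ w : ℂ, HasDerivAt (fun w => d - c * w / 2) (-(c / 2)) w := fun w => by
    simpa using (((hasDerivAt_id w).const_mul c).div_const 2).const_sub d
  have hsin : ∀ w : ℂ, HasDerivAt (fun w => Complex.sin (d - c * w / 2))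
      (-(c / 2) * Complex.cos (d - c * w / 2)) w := fun w => by
    refine ((Complex.hasDerivAt_sin (d - c * w / 2)).comp w (hg w)).congr_deriv ?_
    ring
  have hcos : ∀ w : ℂ, HasDerivAt (fun w => Complex.cos (d - c * w / 2))
      (c / 2 * Complex.sin (d - c * w / 2)) w := fun w => by
    have h := (Complex.hasDerivAt_cos (d - c * w / 2)).comp w (hg w)
    refine h.congr_deriv ?_
    ring
  have hf' : ∀ w ∈ S, HasDerivAt (fun z => c * (Complex.cos (d - c * z / 2) / Complex.sin (d - c * z / 2)))
      (c ^ 2 / (2 * Complex.sin (d - c * w / 2) ^ 2)) w := by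
    intro w hw
    have h := ((hcos w).div (hsin w) hw).const_mul c
    refine h.congr_deriv ?_
    have hpyth := Complex.sin_sq_add_cos_sq (d - c * w / 2)
    have hw' : Complex.sin (d - c * w / 2) ≠ 0 := hw
    set s := Complex.sin (d - c * w / 2)
    set co := Complex.cos (d - c * w / 2)
    have hnum : c / 2 * s * s - co * (-(c / 2) * co) = c / 2 := by
      linear_combination (c / 2) * hpyth
    rw [hnum]
    field_simp
  have hderivf : ∀ w ∈ S, deriv (fun z => c * (Complex.cos (d - c * z / 2) / Complex.sin (d - c * z / 2))) w
      = c ^ 2 / (2 * Complex.sin (d - c * w / 2) ^ 2) := fun w hw => (hf' w hw).deriv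
  have hEq : (deriv (fun z => c * (Complex.cos (d - c * z / 2) / Complex.sin (d - c * z / 2))))
      =ᶠ[nhds z] (fun w => c ^ 2 / (2 * Complex.sin (d - c * w / 2) ^ 2)) :=
    Filter.eventually_of_mem (hSopen.mem_nhds hzS) hderivf
  -- derivative of F1
  have hF1 : HasDerivAt (fun w => c ^ 2 / (2 * Complex.sin (d - c * w / 2) ^ 2))
      (c ^ 3 * Complex.cos (d - c * z / 2) / (2 * Complex.sin (d - c * z / 2) ^ 3)) z := by
    have hden : HasDerivAt (fun w => 2 * Complex.sin (d - c * w / 2) ^ 2)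
        (2 * (2 * Complex.sin (d - c * z / 2) ^ 1 * (-(c / 2) * Complex.cos (d - c * z / 2)))) z :=
      (((hsin z).pow 2).const_mul 2)
    have hdne : 2 * Complex.sin (d - c * z / 2) ^ 2 ≠ 0 := by
      simp [pow_eq_zero_iff, hz]
    have h := (hasDerivAt_const z (c ^ 2)).div hden hdne
    refine h.congr_deriv ?_
    set s := Complex.sin (d - c * z / 2)
    set co := Complex.cos (d - c * z / 2)
    field_simp
    ring
  have hfpp : deriv (deriv (fun z => c * (Complex.cos (d - c * z / 2) / Complex.sin (d - c * z / 2)))) z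
      = c ^ 3 * Complex.cos (d - c * z / 2) / (2 * Complex.sin (d - c * z / 2) ^ 3) := by
    rw [hEq.deriv_eq]
    exact hF1.deriv
  have part1 : deriv (deriv (fun z => c * (Complex.cos (d - c * z / 2) / Complex.sin (d - c * z / 2)))) z
      = (c * (Complex.cos (d - c * z / 2) / Complex.sin (d - c * z / 2))) *
        deriv (fun z => c * (Complex.cos (d - c * z / 2) / Complex.sin (d - c * z / 2))) z := by
    rw [hfpp, hderivf z hzS]
    field_simp
  refine ⟨part1, ?_⟩
  -- u part
  have hu' : ∀ w ∈ S, HasDerivAt (fun z => (c * (Complex.cos (d - c * z / 2) / Complex.sin (d - c * z / 2)) - b2) / a2)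
      (c ^ 2 / (2 * Complex.sin (d - c * w / 2) ^ 2) / a2) w := fun w hw =>
    ((hf' w hw).sub_const b2).div_const a2
  have hderivu : ∀ w ∈ S, deriv (fun z => (c * (Complex.cos (d - c * z / 2) / Complex.sin (d - c * z / 2)) - b2) / a2) w
      = c ^ 2 / (2 * Complex.sin (d - c * w / 2) ^ 2) / a2 := fun w hw => (hu' w hw).deriv
  have hEqu : (deriv (fun z => (c * (Complex.cos (d - c * z / 2) / Complex.sin (d - c * z / 2)) - b2) / a2))
      =ᶠ[nhds z] (fun w => c ^ 2 / (2 * Complex.sin (d - c * w / 2) ^ 2) / a2) :=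
    Filter.eventually_of_mem (hSopen.mem_nhds hzS) hderivu
  have hupp : deriv (deriv (fun z => (c * (Complex.cos (d - c * z / 2) / Complex.sin (d - c * z / 2)) - b2) / a2)) z
      = c ^ 3 * Complex.cos (d - c * z / 2) / (2 * Complex.sin (d - c * z / 2) ^ 3) / a2 := by
    rw [hEqu.deriv_eq]
    exact (hF1.div_const a2).deriv
  rw [hupp, hderivu z hzS]
  beta_reduce
  set s := Complex.sin (d - c * z / 2)
  set co := Complex.cos (d - c * z / 2)
  field_simp
  ring
end

section
/- Let λ, e_1, e_2, g_3 ∈ ℂ with λ ≠ 0, and let c ∈ ℂ satisfy c²λ = 25(e_1 − e_2) ≠ 0. Let W be twice differentiable on an open set V ⊆ ℂ with W''(ζ) = 6W(ζ)² + (g_3·0 + 0) (i.e. W'' = 6W², the Weierstrass equation with g_2 = 0). Define h(z) = (e_1 − e_2)·e^{−2cz/5}·W(e^{−cz/5} − ζ_0) + e_2 on the open set U = {z : e^{−cz/5} − ζ_0 ∈ V}, where ζ_0 ∈ ℂ is fixed. Then h''(z) + c·h'(z) − (6/λ)(h(z) − e_1)(h(z) − e_2) = 0 for all z ∈ U. 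-/
/-- under the Ablowitz–Zeppetella condition `c²λ = 25(e₁ - e₂) ≠ 0`,
`h(z) = (e₁-e₂) e^{-2cz/5} W(e^{-cz/5} - ζ₀) + e₂` with `W'' = 6W²` solves the
travelling-wave Fisher equation `h'' + c h' - (6/λ)(h - e₁)(h - e₂) = 0`. -/
theorem stmt_17 (lam e1 e2 c ζ0 : ℂ) (hlam : lam ≠ 0)
    (hc : c ^ 2 * lam = 25 * (e1 - e2)) (hne : e1 ≠ e2)
    (V : Set ℂ) (hV : IsOpen V) (W : ℂ → ℂ)
    (hW : ∀ ζ ∈ V, DifferentiableAt ℂ W ζ)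
    (hW' : ∀ ζ ∈ V, DifferentiableAt ℂ (deriv W) ζ)
    (hWeq : ∀ ζ ∈ V, deriv (deriv W) ζ = 6 * (W ζ) ^ 2)
    (h : ℂ → ℂ)
    (hh : h = fun z => (e1 - e2) * Complex.exp (-2 * c * z / 5) *
      W (Complex.exp (-c * z / 5) - ζ0) + e2) :
    ∀ z ∈ {z : ℂ | Complex.exp (-c * z / 5) - ζ0 ∈ V},
      deriv (deriv h) z + c * deriv h z
        - (6 / lam) * (h z - e1) * (h z - e2) = 0 := by
  subst hh
  have ha0 : e1 - e2 ≠ 0 := sub_ne_zero.mpr hne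
  have hc0 : c ≠ 0 := by
    intro h0
    apply ha0
    have : (25 : ℂ) * (e1 - e2) = 0 := by rw [← hc, h0]; ring
    have h25 : (25 : ℂ) ≠ 0 := by norm_num
    exact (mul_eq_zero.mp this).resolve_left h25
  have hEE : ∀ z : ℂ, Complex.exp (-2 * c * z / 5) = Complex.exp (-c * z / 5) ^ 2 := by
    intro z
    have : -2 * c * z / 5 = (-c * z / 5) + (-c * z / 5) := by ring
    rw [this, Complex.exp_add, sq]
  set S : Set ℂ := {z : ℂ | Complex.exp (-c * z / 5) - ζ0 ∈ V} with hS
  have hSopen : IsOpen S := by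
    have hcont : Continuous fun z : ℂ => Complex.exp (-c * z / 5) - ζ0 := by fun_prop
    exact hV.preimage hcont
  set F : ℂ → ℂ := fun z => (e1 - e2) * (-(c/5)) *
      (2 * Complex.exp (-c * z / 5) ^ 2 * W (Complex.exp (-c * z / 5) - ζ0)
        + Complex.exp (-c * z / 5) ^ 3 * deriv W (Complex.exp (-c * z / 5) - ζ0)) with hF
  have hlin : ∀ z : ℂ, HasDerivAt (fun z : ℂ => -c * z / 5) (-c / 5) z := by
    intro z
    simpa using ((hasDerivAt_id z).const_mul (-c)).div_const 5
  have hlin2 : ∀ z : ℂ, HasDerivAt (fun z : ℂ => -2 * c * z / 5) (-2 * c / 5) z := by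
    intro z
    simpa [mul_assoc] using ((hasDerivAt_id z).const_mul (-2 * c)).div_const 5
  have hd1 : ∀ z ∈ S, HasDerivAt
      (fun z => (e1 - e2) * Complex.exp (-2 * c * z / 5) *
        W (Complex.exp (-c * z / 5) - ζ0) + e2) (F z) z := by
    intro z hz
    have hE1 : HasDerivAt (fun z : ℂ => Complex.exp (-c * z / 5))
        (Complex.exp (-c * z / 5) * (-c / 5)) z := (hlin z).cexp
    have hE2 : HasDerivAt (fun z : ℂ => Complex.exp (-2 * c * z / 5))
        (Complex.exp (-2 * c * z / 5) * (-2 * c / 5)) z := (hlin2 z).cexp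
    have hin : HasDerivAt (fun z : ℂ => Complex.exp (-c * z / 5) - ζ0)
        (Complex.exp (-c * z / 5) * (-c / 5)) z := hE1.sub_const ζ0
    have hWc : HasDerivAt (fun z : ℂ => W (Complex.exp (-c * z / 5) - ζ0))
        (deriv W (Complex.exp (-c * z / 5) - ζ0) * (Complex.exp (-c * z / 5) * (-c / 5))) z :=
      (hW _ hz).hasDerivAt.comp z hin
    have := ((hE2.const_mul (e1 - e2)).mul hWc).add_const e2
    refine this.congr_deriv ?_
    rw [hF, hEE z]
    ring
  have hd2 : ∀ z ∈ S, HasDerivAt F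
      ((e1 - e2) * (c ^ 2 / 25) *
        (4 * Complex.exp (-c * z / 5) ^ 2 * W (Complex.exp (-c * z / 5) - ζ0)
          + 5 * Complex.exp (-c * z / 5) ^ 3 * deriv W (Complex.exp (-c * z / 5) - ζ0)
          + Complex.exp (-c * z / 5) ^ 4 *
            deriv (deriv W) (Complex.exp (-c * z / 5) - ζ0))) z := by
    intro z hz
    have hE1 : HasDerivAt (fun z : ℂ => Complex.exp (-c * z / 5))
        (Complex.exp (-c * z / 5) * (-c / 5)) z := (hlin z).cexp
    have hin : HasDerivAt (fun z : ℂ => Complex.exp (-c * z / 5) - ζ0)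
        (Complex.exp (-c * z / 5) * (-c / 5)) z := hE1.sub_const ζ0
    have hWc : HasDerivAt (fun z : ℂ => W (Complex.exp (-c * z / 5) - ζ0))
        (deriv W (Complex.exp (-c * z / 5) - ζ0) * (Complex.exp (-c * z / 5) * (-c / 5))) z :=
      (hW _ hz).hasDerivAt.comp z hin
    have hW'c : HasDerivAt (fun z : ℂ => deriv W (Complex.exp (-c * z / 5) - ζ0))
        (deriv (deriv W) (Complex.exp (-c * z / 5) - ζ0)
          * (Complex.exp (-c * z / 5) * (-c / 5))) z :=
      HasDerivAt.comp (h₂ := deriv W) z ((hW' _ hz).hasDerivAt) hin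
    have hp2 := hE1.pow 2
    have hp3 := hE1.pow 3
    have h1 := (hp2.const_mul (2 : ℂ)).mul hWc
    have h2 := hp3.mul hW'c
    have := (h1.add h2).const_mul ((e1 - e2) * (-(c/5)))
    refine this.congr_deriv ?_
    push_cast
    simp only [Pi.pow_apply]
    ring
  intro z hz
  have hderiv1 : deriv (fun z => (e1 - e2) * Complex.exp (-2 * c * z / 5) *
      W (Complex.exp (-c * z / 5) - ζ0) + e2) z = F z := (hd1 z hz).deriv
  have heq : Set.EqOn (deriv (fun z => (e1 - e2) * Complex.exp (-2 * c * z / 5) *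
      W (Complex.exp (-c * z / 5) - ζ0) + e2)) F S := fun w hw => (hd1 w hw).deriv
  have hev : deriv (fun z => (e1 - e2) * Complex.exp (-2 * c * z / 5) *
      W (Complex.exp (-c * z / 5) - ζ0) + e2) =ᶠ[nhds z] F :=
    heq.eventuallyEq_of_mem (hSopen.mem_nhds hz)
  have hderiv2 : deriv (deriv (fun z => (e1 - e2) * Complex.exp (-2 * c * z / 5) *
      W (Complex.exp (-c * z / 5) - ζ0) + e2)) z = deriv F z := hev.deriv_eq
  rw [hderiv1, hderiv2, (hd2 z hz).deriv, hWeq _ hz]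
  have hlam' : lam = 25 * (e1 - e2) / c ^ 2 := by
    rw [eq_div_iff (pow_ne_zero 2 hc0)]
    linear_combination hc
  simp only [hF]
  rw [hEE z, hlam']
  field_simp
  ring
end

section
/- Let a_1, a_2, b_1, α ∈ ℂ with a_2 ≠ 0 and α a_1 + b_1 ≠ 0, and set b_2 = 2α a_1 − α a_2 + 2 b_1. Fix z_0 ∈ ℂ. Then the function u(z) = (−2α a_1 + α a_2 − 2 b_1)/a_2 − 2(α a_1 + b_1)/(a_2·(e^{(z − z_0)(α a_1 + b_1)} − 1)) satisfies u'' + u'·(α a_1 − (2a_1 + a_2)u − b_1 − b_2) + (u − α)(a_1 u + b_1)(a_2 u + b_2) = 0 at every z where e^{(z − z_0)(α a_1 + b_1)} ≠ 1. -/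
open Complex

private lemma exp_hasDeriv (c z0 z : ℂ) :
    HasDerivAt (fun z => Complex.exp ((z - z0) * c))
      (c * Complex.exp ((z - z0) * c)) z := by
  have h1 : HasDerivAt (fun z : ℂ => (z - z0) * c) c z := by
    simpa using ((hasDerivAt_id z).sub_const z0).mul_const c
  simpa [mul_comm] using h1.cexp

private lemma u_hasDeriv (C c a2 z0 z : ℂ) (ha2 : a2 ≠ 0)
    (hz : Complex.exp ((z - z0) * c) ≠ 1) :
    HasDerivAt (fun z => C - 2 * c / (a2 * (Complex.exp ((z - z0) * c) - 1)))
      (2 * c ^ 2 * Complex.exp ((z - z0) * c) /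
        (a2 * (Complex.exp ((z - z0) * c) - 1) ^ 2)) z := by
  have hE := exp_hasDeriv c z0 z
  have hg : HasDerivAt (fun z => a2 * (Complex.exp ((z - z0) * c) - 1))
      (a2 * (c * Complex.exp ((z - z0) * c))) z := (hE.sub_const 1).const_mul a2
  have hgne : a2 * (Complex.exp ((z - z0) * c) - 1) ≠ 0 :=
    mul_ne_zero ha2 (sub_ne_zero.mpr hz)
  have hd := ((hasDerivAt_const z (2 * c)).div hg hgne).const_sub C
  refine HasDerivAt.congr_deriv hd ?_
  have h1 : Complex.exp ((z - z0) * c) - 1 ≠ 0 := sub_ne_zero.mpr hz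
  generalize Complex.exp ((z - z0) * c) = e at h1 ⊢
  field_simp
  ring

set_option maxHeartbeats 1000000 in
/-- the explicit exponential solution of Subcase B2 of the
factorized second-order ODE. -/
theorem stmt_19 (a1 a2 b1 α z0 : ℂ) (ha2 : a2 ≠ 0) (hne : α * a1 + b1 ≠ 0)
    (b2 : ℂ) (hb2 : b2 = 2 * α * a1 - α * a2 + 2 * b1)
    (u : ℂ → ℂ)
    (hu : u = fun z => (-2 * α * a1 + α * a2 - 2 * b1) / a2 -
      2 * (α * a1 + b1) / (a2 * (Complex.exp ((z - z0) * (α * a1 + b1)) - 1))) :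
    ∀ z : ℂ, Complex.exp ((z - z0) * (α * a1 + b1)) ≠ 1 →
      deriv (deriv u) z
        + deriv u z * (α * a1 - (2 * a1 + a2) * u z - b1 - b2)
        + (u z - α) * (a1 * u z + b1) * (a2 * u z + b2) = 0 := by
  intro z hz
  have hu' : u = fun z => (-2 * α * a1 + α * a2 - 2 * b1) / a2 -
      2 * (α * a1 + b1) / (a2 * (Complex.exp ((z - z0) * (α * a1 + b1)) - 1)) := hu
  have hopen : IsOpen {w : ℂ | Complex.exp ((w - z0) * (α * a1 + b1)) ≠ 1} :=
    isOpen_compl_singleton.preimage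
      (Complex.continuous_exp.comp ((continuous_id.sub continuous_const).mul continuous_const))
  have hderiv : ∀ w ∈ {w : ℂ | Complex.exp ((w - z0) * (α * a1 + b1)) ≠ 1},
      deriv u w = 2 * (α * a1 + b1) ^ 2 * Complex.exp ((w - z0) * (α * a1 + b1)) /
        (a2 * (Complex.exp ((w - z0) * (α * a1 + b1)) - 1) ^ 2) := by
    intro w hw
    rw [hu']
    exact (u_hasDeriv ((-2 * α * a1 + α * a2 - 2 * b1) / a2) (α * a1 + b1) a2 z0 w ha2 hw).deriv
  have heq : deriv u =ᶠ[nhds z] fun w =>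
      2 * (α * a1 + b1) ^ 2 * Complex.exp ((w - z0) * (α * a1 + b1)) /
        (a2 * (Complex.exp ((w - z0) * (α * a1 + b1)) - 1) ^ 2) :=
    Filter.eventuallyEq_of_mem (hopen.mem_nhds hz) hderiv
  have hE := exp_hasDeriv (α * a1 + b1) z0 z
  have hene : Complex.exp ((z - z0) * (α * a1 + b1)) - 1 ≠ 0 := sub_ne_zero.mpr hz
  have hFnum : HasDerivAt (fun w => 2 * (α * a1 + b1) ^ 2 * Complex.exp ((w - z0) * (α * a1 + b1)))
      (2 * (α * a1 + b1) ^ 2 * ((α * a1 + b1) * Complex.exp ((z - z0) * (α * a1 + b1)))) z :=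
    hE.const_mul _
  have hFden : HasDerivAt (fun w => a2 * (Complex.exp ((w - z0) * (α * a1 + b1)) - 1) ^ 2)
      (a2 * (2 * (Complex.exp ((z - z0) * (α * a1 + b1)) - 1) *
        ((α * a1 + b1) * Complex.exp ((z - z0) * (α * a1 + b1))))) z := by
    have h1 : HasDerivAt (fun w => (Complex.exp ((w - z0) * (α * a1 + b1)) - 1) ^ 2)
        (2 * (Complex.exp ((z - z0) * (α * a1 + b1)) - 1) *
          ((α * a1 + b1) * Complex.exp ((z - z0) * (α * a1 + b1)))) z := by
      have := (hE.sub_const 1).pow 2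
      simp [pow_one] at this
      exact this
    exact h1.const_mul a2
  have hdenne : a2 * (Complex.exp ((z - z0) * (α * a1 + b1)) - 1) ^ 2 ≠ 0 :=
    mul_ne_zero ha2 (pow_ne_zero 2 hene)
  have hF' := hFnum.div hFden hdenne
  have hderiv2 : deriv (deriv u) z =
      (2 * (α * a1 + b1) ^ 2 * ((α * a1 + b1) * Complex.exp ((z - z0) * (α * a1 + b1))) *
          (a2 * (Complex.exp ((z - z0) * (α * a1 + b1)) - 1) ^ 2) -
        2 * (α * a1 + b1) ^ 2 * Complex.exp ((z - z0) * (α * a1 + b1)) *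
          (a2 * (2 * (Complex.exp ((z - z0) * (α * a1 + b1)) - 1) *
            ((α * a1 + b1) * Complex.exp ((z - z0) * (α * a1 + b1)))))) /
        (a2 * (Complex.exp ((z - z0) * (α * a1 + b1)) - 1) ^ 2) ^ 2 := by
    rw [heq.deriv_eq]
    exact hF'.deriv
  have hderiv1 := hderiv z hz
  rw [hderiv2, hderiv1, hb2]
  simp only [hu]
  generalize Complex.exp ((z - z0) * (α * a1 + b1)) = e at hene ⊢
  field_simp
  have hk : a2 * (e - 1) ^ 2 ≠ 0 := mul_ne_zero ha2 (pow_ne_zero 2 hene)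
  have hm : a2 * (a2 * (e - 1)) ≠ 0 := mul_ne_zero ha2 (mul_ne_zero ha2 hene)
  have h3 : ((a2 * (e - 1) ^ 2) ^ 2 * (a2 * (e - 1) ^ 2 * (a2 * (a2 * (e - 1))))) ≠ 0 :=
    mul_ne_zero (pow_ne_zero 2 hk) (mul_ne_zero hk hm)
  have h4 : (a2 * (a2 * (e - 1)) * (a2 * (a2 * (e - 1))) * (a2 * (a2 * (e - 1)))) ≠ 0 :=
    mul_ne_zero (mul_ne_zero hm hm) hm
  rw [mul_zero]
  ring
end
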